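/- Subadditivity over a cover: if f_1,...,f_r : X → Y are fibrewise maps over B and {U_0,...,U_k} is an open cover of X, then D_B(f_1,...,f_r) ≤ Σ_{i=0}^k D_B(f_1|_{U_i},...,f_r|_{U_i}) + k. -/

import Mathlib

open Set

/-- Two continuous maps are fibrewise homotopic over `B`: there is a homotopy
whose every time-slice commutes with the projections to `B`. -/
def FibHomotopic {B X Y : Type*} [TopologicalSpace B] [TopologicalSpace X] [TopologicalSpace Y]
    (pX : X → B) (pY : Y → B) (f g : C(X, Y)) : Prop :=
  ∃ H : f.Homotopy g, ∀ (x : X) (t : unitInterval), pY (H (t, x)) = pX x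

/-- Sequential parametrized homotopic distance of a family of fibrewise maps:
the least `n` such that `X` admits an open cover by `n + 1` open sets on each of
which all the maps are pairwise fibrewise homotopic (`∞` if none exists). -/
noncomputable def fibDist {B X Y ι : Type*} [TopologicalSpace B] [TopologicalSpace X]
    [TopologicalSpace Y] (pX : X → B) (pY : Y → B) (f : ι → C(X, Y)) : ℕ∞ :=
  sInf {n : ℕ∞ | ∃ k : ℕ, (k : ℕ∞) = n ∧ ∃ U : Fin (k + 1) → Set X,
    (∀ i, IsOpen (U i)) ∧ (⋃ i, U i) = Set.univ ∧
    ∀ i s t, FibHomotopic (fun x : U i => pX (x : X)) pY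
      ((f s).restrict (U i)) ((f t).restrict (U i))}

lemma FibHomotopic.comp_right {B Z X Y : Type*} [TopologicalSpace B] [TopologicalSpace Z]
    [TopologicalSpace X] [TopologicalSpace Y] {pX : X → B} {pY : Y → B} {f g : C(X, Y)}
    (h : FibHomotopic pX pY f g) (φ : C(Z, X)) :
    FibHomotopic (pX ∘ φ) pY (f.comp φ) (g.comp φ) := by
  obtain ⟨H, hH⟩ := h
  refine ⟨⟨⟨fun p => H (p.1, φ p.2), ?_⟩, ?_, ?_⟩, fun z t => hH (φ z) t⟩
  · exact H.continuous.comp (continuous_fst.prodMk (φ.continuous.comp continuous_snd))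
  · simp
  · simp

theorem stmt6 {B X Y : Type*} [TopologicalSpace B] [TopologicalSpace X] [TopologicalSpace Y]
    (pX : X → B) (pY : Y → B) (hpX : Continuous pX) (hpY : Continuous pY)
    (r : ℕ) (f : Fin r → C(X, Y)) (hf : ∀ i x, pY (f i x) = pX x)
    (k : ℕ) (U : Fin (k + 1) → Set X) (hUo : ∀ i, IsOpen (U i))
    (hUc : (⋃ i, U i) = Set.univ) :
    fibDist pX pY f ≤
      (∑ i : Fin (k + 1),
        fibDist (fun x : U i => pX (x : X)) pY (fun s => (f s).restrict (U i))) + k := by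
  classical
  by_cases htop : ∃ i, fibDist (fun x : U i => pX (x : X)) pY (fun s => (f s).restrict (U i)) = ⊤
  · obtain ⟨i, hi⟩ := htop
    have : (⊤ : ℕ∞) ≤ ∑ i : Fin (k + 1),
        fibDist (fun x : U i => pX (x : X)) pY (fun s => (f s).restrict (U i)) := by
      have h2 := Finset.single_le_sum (f := fun j : Fin (k + 1) =>
        fibDist (fun x : U j => pX (x : X)) pY (fun s => (f s).restrict (U j)))
        (fun j _ => zero_le) (Finset.mem_univ i)
      beta_reduce at h2
      rw [hi] at h2
      exact h2
    calc fibDist pX pY f ≤ ⊤ := le_top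
      _ ≤ _ := le_trans this le_self_add
  · push_neg at htop
    -- for each i, the defining set is nonempty so the sInf is attained
    have key : ∀ i : Fin (k + 1), ∃ n : ℕ,
        (n : ℕ∞) = fibDist (fun x : U i => pX (x : X)) pY (fun s => (f s).restrict (U i)) ∧
        ∃ V : Fin (n + 1) → Set (U i), (∀ j, IsOpen (V j)) ∧ (⋃ j, V j) = Set.univ ∧
        ∀ j s t, FibHomotopic (fun x : V j => pX ((x : U i) : X)) pY
          (((f s).restrict (U i)).restrict (V j)) (((f t).restrict (U i)).restrict (V j)) := by
      intro i
      have hne : {n : ℕ∞ | ∃ m : ℕ, (m : ℕ∞) = n ∧ ∃ V : Fin (m + 1) → Set (U i),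
          (∀ j, IsOpen (V j)) ∧ (⋃ j, V j) = Set.univ ∧
          ∀ j s t, FibHomotopic (fun x : V j => pX ((x : U i) : X)) pY
            (((f s).restrict (U i)).restrict (V j))
            (((f t).restrict (U i)).restrict (V j))}.Nonempty := by
        by_contra h
        rw [Set.not_nonempty_iff_eq_empty] at h
        exact htop i (by rw [fibDist, h, sInf_empty])
      have := csInf_mem hne
      obtain ⟨m, hm, hV⟩ := this
      exact ⟨m, hm, hV⟩
    choose n hn V hVo hVc hVh using key
    -- total index count
    have hcard : Fintype.card ((i : Fin (k + 1)) × Fin (n i + 1)) =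
        (∑ i : Fin (k + 1), n i) + k + 1 := by
      simp [Fintype.card_sigma, Finset.sum_add_distrib]
      ring
    let e : Fin ((∑ i : Fin (k + 1), n i) + k + 1) ≃ ((i : Fin (k + 1)) × Fin (n i + 1)) :=
      (Fintype.equivFinOfCardEq hcard).symm
    -- the candidate cover of X
    let W : Fin ((∑ i : Fin (k + 1), n i) + k + 1) → Set X :=
      fun j => Subtype.val '' (V (e j).1 (e j).2)
    have hmem : ((∑ i : Fin (k + 1), n i : ℕ) + k : ℕ∞) ∈ {n : ℕ∞ | ∃ m : ℕ, (m : ℕ∞) = n ∧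
        ∃ W : Fin (m + 1) → Set X, (∀ j, IsOpen (W j)) ∧ (⋃ j, W j) = Set.univ ∧
        ∀ j s t, FibHomotopic (fun x : W j => pX (x : X)) pY
          ((f s).restrict (W j)) ((f t).restrict (W j))} := by
      refine ⟨(∑ i : Fin (k + 1), n i) + k, by push_cast; ring, W, ?_, ?_, ?_⟩
      · intro j
        exact ((hUo (e j).1).isOpenMap_subtype_val) _ (hVo (e j).1 (e j).2)
      · apply Set.eq_univ_of_forall
        intro x
        have hx : x ∈ ⋃ i, U i := hUc ▸ Set.mem_univ x
        obtain ⟨i, hi⟩ := Set.mem_iUnion.mp hx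
        have : (⟨x, hi⟩ : U i) ∈ ⋃ j, V i j := (hVc i) ▸ Set.mem_univ _
        obtain ⟨j, hj⟩ := Set.mem_iUnion.mp this
        refine Set.mem_iUnion.mpr ⟨e.symm ⟨i, j⟩, ?_⟩
        show x ∈ Subtype.val '' (V (e (e.symm ⟨i, j⟩)).1 (e (e.symm ⟨i, j⟩)).2)
        rw [e.apply_symm_apply]
        exact ⟨⟨x, hi⟩, hj, rfl⟩
      · intro j s t
        set i := (e j).1
        set jj := (e j).2
        -- map from W j to V i jj
        have hWU : ∀ w : W j, (w : X) ∈ U i := by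
          rintro ⟨w, v, hv, rfl⟩; exact v.2
        have hWV : ∀ w : W j, (⟨(w : X), hWU w⟩ : U i) ∈ V i jj := by
          rintro ⟨w, v, hv, rfl⟩; convert hv
        let φ : C(W j, V i jj) :=
          ⟨fun w => ⟨⟨(w : X), hWU w⟩, hWV w⟩, by
            refine Continuous.subtype_mk (Continuous.subtype_mk ?_ _) _
            exact continuous_subtype_val⟩
        have := (hVh i jj s t).comp_right φ
        exact this
    calc fibDist pX pY f ≤ ((∑ i : Fin (k + 1), n i : ℕ) + k : ℕ∞) := sInf_le hmem
      _ = _ := by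
          rw [Nat.cast_sum]
          congr 1
          exact Finset.sum_congr rfl fun i _ => hn i
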